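/- Wold decomposition for a 𝔓-isometry: Let (V₁,V₂,V₃) be a 𝔓-isometry on a complex Hilbert space H. Then there is a unique orthogonal decomposition H = H_u ⊕ H_c into closed subspaces H_u and H_c, each jointly reducing for V₁, V₂ and V₃, such that (V₁|_{H_u}, V₂|_{H_u}, V₃|_{H_u}) is a 𝔓-unitary and (V₁|_{H_c}, V₂|_{H_c}, V₃|_{H_c}) is a pure 𝔓-isometry, i.e. there is no nonzero closed subspace of H_c, jointly reducing for V₁,V₂,V₃, on which the restricted triple is a 𝔓-unitary. -/

import Mathlib

open ContinuousLinearMap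

noncomputable section

variable {H : Type*} [NormedAddCommGroup H] [InnerProductSpace ℂ H] [CompleteSpace H]

/-- A 𝔓-isometry (the paper's algebraic characterization): a commuting triple (V₁,V₂,V₃)
with V₃ an isometry, V₂ = V₂*V₃, ‖V₂‖ ≤ 2 and V₁*V₁ + ¼V₂*V₂ = I. -/
def IsPIsometry (V₁ V₂ V₃ : H →L[ℂ] H) : Prop :=
  Commute V₁ V₂ ∧ Commute V₁ V₃ ∧ Commute V₂ V₃ ∧
    adjoint V₃ * V₃ = 1 ∧ V₂ = adjoint V₂ * V₃ ∧ ‖V₂‖ ≤ 2 ∧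
    adjoint V₁ * V₁ + (1 / 4 : ℂ) • (adjoint V₂ * V₂) = 1

/-- A closed subspace L jointly reduces the triple (V₁,V₂,V₃): it is invariant under each
operator and under each adjoint. -/
def ReducesTriple (L : Submodule ℂ H) (V₁ V₂ V₃ : H →L[ℂ] H) : Prop :=
  (∀ x ∈ L, V₁ x ∈ L) ∧ (∀ x ∈ L, V₂ x ∈ L) ∧ (∀ x ∈ L, V₃ x ∈ L) ∧
    (∀ x ∈ L, adjoint V₁ x ∈ L) ∧ (∀ x ∈ L, adjoint V₂ x ∈ L) ∧ (∀ x ∈ L, adjoint V₃ x ∈ L)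

/-- On a jointly reducing subspace L, the restriction of (V₁,V₂,V₃) is a 𝔓-unitary, expressed
pointwise (the adjoint of a restriction to a reducing subspace is the restriction of the
adjoint): each restriction is normal, V₃ is unitary on L, V₂ = V₂*V₃ on L, ‖V₂x‖ ≤ 2‖x‖ on L
and V₁*V₁ = I − ¼V₂*V₂ on L. -/
def IsPUnitaryOn (L : Submodule ℂ H) (V₁ V₂ V₃ : H →L[ℂ] H) : Prop :=
  (∀ x ∈ L, V₁ (adjoint V₁ x) = adjoint V₁ (V₁ x)) ∧
    (∀ x ∈ L, V₂ (adjoint V₂ x) = adjoint V₂ (V₂ x)) ∧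
    (∀ x ∈ L, V₃ (adjoint V₃ x) = adjoint V₃ (V₃ x)) ∧
    (∀ x ∈ L, adjoint V₃ (V₃ x) = x) ∧ (∀ x ∈ L, V₃ (adjoint V₃ x) = x) ∧
    (∀ x ∈ L, V₂ x = adjoint V₂ (V₃ x)) ∧
    (∀ x ∈ L, ‖V₂ x‖ ≤ 2 * ‖x‖) ∧
    (∀ x ∈ L, adjoint V₁ (V₁ x) + (1 / 4 : ℂ) • adjoint V₂ (V₂ x) = x)

/-- Invariance of a submodule under a continuous linear operator. -/
def OpInv (T : H →L[ℂ] H) (L : Submodule ℂ H) : Prop := ∀ x ∈ L, T x ∈ L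

lemma opInv_sSup {T : H →L[ℂ] H} {S : Set (Submodule ℂ H)}
    (h : ∀ L ∈ S, OpInv T L) : OpInv T (sSup S) := by
  intro x hx
  have hle : sSup S ≤ Submodule.comap (T : H →ₗ[ℂ] H) (sSup S) := by
    refine sSup_le fun L hL => ?_
    have h1 : L ≤ Submodule.comap (T : H →ₗ[ℂ] H) L := fun y hy =>
      Submodule.mem_comap.mpr (h L hL y hy)
    exact le_trans h1 (Submodule.comap_mono (le_sSup hL))
  exact hle hx

lemma opInv_closure {T : H →L[ℂ] H} {L : Submodule ℂ H} (h : OpInv T L) :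
    OpInv T L.topologicalClosure := by
  intro x hx
  have hsub : (L : Set H) ⊆ T ⁻¹' closure (L : Set H) :=
    fun y hy => subset_closure (h y hy)
  have := closure_minimal hsub (IsClosed.preimage T.continuous isClosed_closure)
  exact this hx

lemma opInv_orthogonal {T : H →L[ℂ] H} {L : Submodule ℂ H}
    (h : OpInv (adjoint T) L) : OpInv T Lᗮ := by
  intro x hx
  rw [Submodule.mem_orthogonal]
  intro u hu
  have : (inner ℂ u (T x) : ℂ) = inner ℂ (adjoint T u) x := by
    conv_lhs => rw [← adjoint_adjoint T]
    rw [adjoint_inner_right]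
  rw [this]
  exact (Submodule.mem_orthogonal L x).mp hx _ (h u hu)

lemma opInv_inf {T : H →L[ℂ] H} {L L' : Submodule ℂ H}
    (h : OpInv T L) (h' : OpInv T L') : OpInv T (L ⊓ L') :=
  fun x hx => ⟨h x hx.1, h' x hx.2⟩

lemma ReducesTriple.opInv {L : Submodule ℂ H} {V₁ V₂ V₃ : H →L[ℂ] H}
    (h : ReducesTriple L V₁ V₂ V₃) :
    OpInv V₁ L ∧ OpInv V₂ L ∧ OpInv V₃ L ∧
      OpInv (adjoint V₁) L ∧ OpInv (adjoint V₂) L ∧ OpInv (adjoint V₃) L := h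

lemma ReducesTriple.orthogonal' {L : Submodule ℂ H} {V₁ V₂ V₃ : H →L[ℂ] H}
    (h : ReducesTriple L V₁ V₂ V₃) : ReducesTriple Lᗮ V₁ V₂ V₃ := by
  obtain ⟨h1, h2, h3, h4, h5, h6⟩ := h
  refine ⟨opInv_orthogonal h4, opInv_orthogonal h5, opInv_orthogonal h6,
    opInv_orthogonal ?_, opInv_orthogonal ?_, opInv_orthogonal ?_⟩ <;>
    rw [adjoint_adjoint] <;> assumption

lemma ReducesTriple.inf' {L L' : Submodule ℂ H} {V₁ V₂ V₃ : H →L[ℂ] H}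
    (h : ReducesTriple L V₁ V₂ V₃) (h' : ReducesTriple L' V₁ V₂ V₃) :
    ReducesTriple (L ⊓ L') V₁ V₂ V₃ :=
  ⟨opInv_inf h.1 h'.1, opInv_inf h.2.1 h'.2.1, opInv_inf h.2.2.1 h'.2.2.1,
    opInv_inf h.2.2.2.1 h'.2.2.2.1, opInv_inf h.2.2.2.2.1 h'.2.2.2.2.1,
    opInv_inf h.2.2.2.2.2 h'.2.2.2.2.2⟩

lemma ReducesTriple.sSup' {S : Set (Submodule ℂ H)} {V₁ V₂ V₃ : H →L[ℂ] H}
    (h : ∀ L ∈ S, ReducesTriple L V₁ V₂ V₃) : ReducesTriple (sSup S) V₁ V₂ V₃ :=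
  ⟨opInv_sSup fun L hL => (h L hL).1, opInv_sSup fun L hL => (h L hL).2.1,
    opInv_sSup fun L hL => (h L hL).2.2.1, opInv_sSup fun L hL => (h L hL).2.2.2.1,
    opInv_sSup fun L hL => (h L hL).2.2.2.2.1, opInv_sSup fun L hL => (h L hL).2.2.2.2.2⟩

lemma ReducesTriple.closure' {L : Submodule ℂ H} {V₁ V₂ V₃ : H →L[ℂ] H}
    (h : ReducesTriple L V₁ V₂ V₃) : ReducesTriple L.topologicalClosure V₁ V₂ V₃ :=
  ⟨opInv_closure h.1, opInv_closure h.2.1, opInv_closure h.2.2.1,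
    opInv_closure h.2.2.2.1, opInv_closure h.2.2.2.2.1, opInv_closure h.2.2.2.2.2⟩

/-- The closed subspace on which the pointwise 𝔓-unitary conditions hold. -/
def unitPart (V₁ V₂ V₃ : H →L[ℂ] H) : Submodule ℂ H :=
  LinearMap.ker ((V₃ * adjoint V₃ - 1 : H →L[ℂ] H) : H →ₗ[ℂ] H) ⊓
    LinearMap.ker ((V₁ * adjoint V₁ - adjoint V₁ * V₁ : H →L[ℂ] H) : H →ₗ[ℂ] H) ⊓
    LinearMap.ker ((V₂ * adjoint V₂ - adjoint V₂ * V₂ : H →L[ℂ] H) : H →ₗ[ℂ] H)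

lemma mem_unitPart {V₁ V₂ V₃ : H →L[ℂ] H} {x : H} :
    x ∈ unitPart V₁ V₂ V₃ ↔
      V₃ (adjoint V₃ x) = x ∧ V₁ (adjoint V₁ x) = adjoint V₁ (V₁ x) ∧
        V₂ (adjoint V₂ x) = adjoint V₂ (V₂ x) := by
  simp only [unitPart, Submodule.mem_inf, LinearMap.mem_ker, ContinuousLinearMap.coe_sub',
    Pi.sub_apply, ContinuousLinearMap.coe_coe, ContinuousLinearMap.mul_apply,
    ContinuousLinearMap.one_apply, sub_eq_zero, and_assoc]

lemma isClosed_unitPart (V₁ V₂ V₃ : H →L[ℂ] H) :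
    IsClosed ((unitPart V₁ V₂ V₃ : Submodule ℂ H) : Set H) := by
  have h1 : IsClosed ((LinearMap.ker ((V₃ * adjoint V₃ - 1 : H →L[ℂ] H) : H →ₗ[ℂ] H) : Submodule ℂ H) : Set H) :=
    isClosed_ker _
  have h2 : IsClosed ((LinearMap.ker ((V₁ * adjoint V₁ - adjoint V₁ * V₁ : H →L[ℂ] H) : H →ₗ[ℂ] H) : Submodule ℂ H) :
      Set H) := isClosed_ker _
  have h3 : IsClosed ((LinearMap.ker ((V₂ * adjoint V₂ - adjoint V₂ * V₂ : H →L[ℂ] H) : H →ₗ[ℂ] H) : Submodule ℂ H) :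
      Set H) := isClosed_ker _
  exact (h1.inter h2).inter h3

lemma isPUnitaryOn_iff {V₁ V₂ V₃ : H →L[ℂ] H} (h : IsPIsometry V₁ V₂ V₃)
    (L : Submodule ℂ H) : IsPUnitaryOn L V₁ V₂ V₃ ↔ L ≤ unitPart V₁ V₂ V₃ := by
  obtain ⟨-, -, -, h4, h5, h6, h7⟩ := h
  have g3 : ∀ x : H, adjoint V₃ (V₃ x) = x := fun x => by
    have := congrArg (fun T : H →L[ℂ] H => T x) h4
    simpa [ContinuousLinearMap.mul_apply] using this
  have g6 : ∀ x : H, V₂ x = adjoint V₂ (V₃ x) := fun x => by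
    have := congrArg (fun T : H →L[ℂ] H => T x) h5
    simpa [ContinuousLinearMap.mul_apply] using this
  have g8 : ∀ x : H, adjoint V₁ (V₁ x) + (1 / 4 : ℂ) • adjoint V₂ (V₂ x) = x := fun x => by
    have := congrArg (fun T : H →L[ℂ] H => T x) h7
    simpa [ContinuousLinearMap.mul_apply, ContinuousLinearMap.add_apply,
      ContinuousLinearMap.smul_apply] using this
  constructor
  · rintro ⟨p1, p2, -, -, p5, -, -, -⟩ x hx
    exact mem_unitPart.mpr ⟨p5 x hx, p1 x hx, p2 x hx⟩
  · intro hle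
    refine ⟨fun x hx => (mem_unitPart.mp (hle hx)).2.1,
      fun x hx => (mem_unitPart.mp (hle hx)).2.2,
      fun x hx => ?_, fun x hx => g3 x, fun x hx => (mem_unitPart.mp (hle hx)).1,
      fun x hx => g6 x, fun x hx => ?_, fun x hx => g8 x⟩
    · rw [(mem_unitPart.mp (hle hx)).1, g3]
    · calc ‖V₂ x‖ ≤ ‖V₂‖ * ‖x‖ := V₂.le_opNorm x
        _ ≤ 2 * ‖x‖ := by
          have := norm_nonneg x
          nlinarith

/-- Wold decomposition for a 𝔓-isometry: there is a unique orthogonal decomposition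
H = H_u ⊕ H_uᗮ into jointly reducing closed subspaces such that the restriction to H_u is a
𝔓-unitary and the restriction to H_c = H_uᗮ is a pure 𝔓-isometry (no nonzero closed jointly
reducing subspace of H_c carries a 𝔓-unitary restriction). -/
theorem stmt15 (V₁ V₂ V₃ : H →L[ℂ] H) (h : IsPIsometry V₁ V₂ V₃) :
    ∃! Hu : Submodule ℂ H, IsClosed (Hu : Set H) ∧
      ReducesTriple Hu V₁ V₂ V₃ ∧ ReducesTriple Huᗮ V₁ V₂ V₃ ∧
      IsPUnitaryOn Hu V₁ V₂ V₃ ∧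
      (∀ L : Submodule ℂ H, IsClosed (L : Set H) → L ≤ Huᗮ →
        ReducesTriple L V₁ V₂ V₃ → IsPUnitaryOn L V₁ V₂ V₃ → L = ⊥) := by
  classical
  set M := unitPart V₁ V₂ V₃ with hM
  set S : Set (Submodule ℂ H) :=
    {L | ReducesTriple L V₁ V₂ V₃ ∧ L ≤ M} with hS
  set Hu : Submodule ℂ H := (sSup S).topologicalClosure with hHu
  have hsSupM : sSup S ≤ M := sSup_le fun L hL => hL.2
  have hHuM : Hu ≤ M :=
    Submodule.topologicalClosure_minimal _ hsSupM (isClosed_unitPart V₁ V₂ V₃)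
  have hHuClosed : IsClosed ((Hu : Submodule ℂ H) : Set H) :=
    Submodule.isClosed_topologicalClosure _
  have hHuRed : ReducesTriple Hu V₁ V₂ V₃ :=
    (ReducesTriple.sSup' fun L hL => hL.1).closure'
  have hmemS : ∀ L : Submodule ℂ H, ReducesTriple L V₁ V₂ V₃ →
      IsPUnitaryOn L V₁ V₂ V₃ → L ≤ Hu := by
    intro L hr hu
    exact le_trans (le_sSup (Set.mem_setOf_eq ▸ ⟨hr, (isPUnitaryOn_iff h L).mp hu⟩))
      (Submodule.le_topologicalClosure _)
  refine ⟨Hu, ⟨hHuClosed, hHuRed, hHuRed.orthogonal', (isPUnitaryOn_iff h Hu).mpr hHuM,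
    ?_⟩, ?_⟩
  · -- purity
    intro L _ hLle hLr hLu
    have hLHu : L ≤ Hu := hmemS L hLr hLu
    have : L ≤ Hu ⊓ Huᗮ := le_inf hLHu hLle
    rw [(Submodule.orthogonal_disjoint Hu).eq_bot] at this
    exact le_bot_iff.mp this
  · -- uniqueness
    rintro Hu' ⟨hc', hr', hro', hu', hp'⟩
    have hle1 : Hu' ≤ Hu := hmemS Hu' hr' hu'
    have hle2 : Hu ≤ Hu' := by
      have hLbot : Hu ⊓ Hu'ᗮ = ⊥ := by
        refine hp' (Hu ⊓ Hu'ᗮ) ?_ inf_le_right (hHuRed.inf' hro') ?_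
        · exact hHuClosed.inter (Submodule.isClosed_orthogonal Hu')
        · exact (isPUnitaryOn_iff h _).mpr (le_trans inf_le_left hHuM)
      intro x hx
      haveI : CompleteSpace Hu' := hc'.completeSpace_coe
      obtain ⟨y, hy, z, hz, hxyz⟩ := Submodule.exists_add_mem_mem_orthogonal (K := Hu') x
      have hzHu : z ∈ Hu := by
        have : z = x - y := by rw [hxyz]; abel
        rw [this]
        exact Submodule.sub_mem _ hx (hle1 hy)
      have : z ∈ Hu ⊓ Hu'ᗮ := ⟨hzHu, hz⟩
      rw [hLbot] at this
      simp only [Submodule.mem_bot] at this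
      rw [hxyz, this, add_zero]
      exact hy
    exact le_antisymm hle1 hle2
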